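/- arXiv:1912.07536 — 2 statements merged into one kernel-verified Lean document; each statement's English description precedes it below -/
import Mathlib

section
/- Let m ≥ 2 and let V be a subspace of ℂ² ⊗ ℂᵐ of dimension m − 1 that contains no nonzero product vector a ⊗ b. Then there exists an invertible linear map 𝒜 : ℂᵐ → ℂᵐ such that the orthogonal complement V^⊥ equals the linear span of the vectors (1,α) ⊗ 𝒜(1,α,α²,…,α^{m−1}) as α ranges over ℂ. -/
noncomputable section

open Polynomial in
lemma aux_coeffs_zero {N : ℕ} (a : Fin N → ℂ)
    (h : ∀ β : ℂ, ∑ j : Fin N, a j * β ^ (j : ℕ) = 0) : a = 0 := by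
  have hq : (∑ j : Fin N, C (a j) * X ^ (j : ℕ)) = (0 : ℂ[X]) := by
    apply Polynomial.funext
    intro β
    simp [Polynomial.eval_finset_sum, h β]
  funext j
  have := congrArg (fun p => Polynomial.coeff p (j : ℕ)) hq
  simp only [Polynomial.finset_sum_coeff, Polynomial.coeff_C_mul, Polynomial.coeff_X_pow,
    Polynomial.coeff_zero, mul_ite, mul_one, mul_zero] at this
  rw [Finset.sum_eq_single j] at this
  · simpa using this
  · intro b _ hb
    have : ¬ ((j:ℕ) = (b:ℕ)) := fun hc => hb (Fin.ext hc.symm)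
    simp [this]
  · simp


open Polynomial in
lemma aux_core {n : ℕ} (x y : Fin n → Fin (n+1) → ℂ)
    (hxy : ∀ (β : ℂ) (c : Fin n → ℂ),
      (∀ k, ∑ i : Fin n, c i * (x i k + β * y i k) = 0) → c = 0)
    (hy : ∀ c : Fin n → ℂ, (∀ k, ∑ i : Fin n, c i * y i k = 0) → c = 0)
    (d : Fin (n+1) → ℂ) (g : Fin (n+1) → ℂ[X]) (hg : g ≠ 0)
    (hrel : ∀ k, g 0 * C (d k)
      + ∑ i : Fin n, g i.succ * (C (x i k) + X * C (y i k)) = 0) :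
    d = 0 := by
  suffices H : ∀ (D : ℕ) (g : Fin (n+1) → ℂ[X]), (g 0).natDegree ≤ D → g ≠ 0 →
      (∀ k, g 0 * C (d k)
        + ∑ i : Fin n, g i.succ * (C (x i k) + X * C (y i k)) = 0) → d = 0 from
    H _ g le_rfl hg hrel
  clear hg hrel g
  intro D
  induction D using Nat.strong_induction_on with
  | _ D IH =>
  intro g hdeg hg hrel
  by_cases hg0 : g 0 = 0
  · -- then all other coordinates vanish too, contradicting g ≠ 0
    exfalso
    apply hg
    have hz : ∀ i : Fin n, g i.succ = 0 := by
      intro i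
      have hev : ∀ β : ℂ, (fun i => eval β (g i.succ)) = (0 : Fin n → ℂ) := by
        intro β
        apply hxy β
        intro k
        have := congrArg (eval β) (hrel k)
        simp only [eval_add, eval_mul, eval_C, eval_X, eval_finset_sum, hg0,
          eval_zero, zero_mul, zero_add] at this
        exact this
      apply Polynomial.funext
      intro β
      have := congrFun (hev β) i
      simpa using this
    funext r
    rcases Fin.eq_zero_or_eq_succ r with h | ⟨i, rfl⟩
    · simpa [h] using hg0
    · simpa using hz i
  · by_cases hroot : ∃ β : ℂ, eval β (g 0) = 0
    · obtain ⟨β, hβ⟩ := hroot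
      -- all coordinates vanish at β
      have hall : ∀ r, eval β (g r) = 0 := by
        have hcz : (fun i => eval β (g i.succ)) = (0 : Fin n → ℂ) := by
          apply hxy β
          intro k
          have := congrArg (eval β) (hrel k)
          simp only [eval_add, eval_mul, eval_C, eval_X, eval_finset_sum, hβ,
            eval_zero, zero_mul, zero_add] at this
          exact this
        intro r
        rcases Fin.eq_zero_or_eq_succ r with h | ⟨i, rfl⟩
        · simpa [h] using hβ
        · simpa using congrFun hcz i
      set h : Fin (n+1) → ℂ[X] := fun r => g r / (X - C β) with hh
      have hXβ : (X - C β : ℂ[X]) ≠ 0 := X_sub_C_ne_zero β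
      have hfac : ∀ r, g r = (X - C β) * h r := by
        intro r
        exact (EuclideanDomain.mul_div_cancel' hXβ
          ((dvd_iff_isRoot).mpr (hall r))).symm
      have hh0 : h 0 ≠ 0 := by
        intro hc
        exact hg0 (by rw [hfac 0, hc, mul_zero])
      have hdeg' : (g 0).natDegree = (h 0).natDegree + 1 := by
        rw [hfac 0, natDegree_mul hXβ hh0, natDegree_X_sub_C, add_comm]
      have hlt : (h 0).natDegree < D := by omega
      apply IH ((h 0).natDegree) hlt h le_rfl
      · intro hc
        exact hh0 (by rw [hc]; rfl)
      · intro k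
        have h2 : (X - C β) * (h 0 * C (d k)
            + ∑ i : Fin n, h i.succ * (C (x i k) + X * C (y i k)))
            = g 0 * C (d k)
            + ∑ i : Fin n, g i.succ * (C (x i k) + X * C (y i k)) := by
          rw [mul_add, Finset.mul_sum]
          congr 1
          · rw [hfac 0, mul_assoc]
          · exact Finset.sum_congr rfl (fun i _ => by rw [hfac i.succ, mul_assoc])
        have := h2.trans (hrel k)
        exact mul_left_cancel₀ hXβ (by rw [this, mul_zero])
    · -- g 0 is a nonzero constant
      push_neg at hroot
      have hconst : (g 0).natDegree = 0 := by
        by_contra hc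
        obtain ⟨z, hz⟩ := Complex.exists_root
          (natDegree_pos_iff_degree_pos.mp (Nat.pos_of_ne_zero hc))
        exact hroot z hz
      obtain ⟨a, ha⟩ : ∃ a : ℂ, g 0 = C a := ⟨_, (eq_C_of_natDegree_eq_zero hconst)⟩
      have ha0 : a ≠ 0 := by
        intro hc
        exact hg0 (by rw [ha, hc, map_zero])
      by_cases hzero : ∀ i : Fin n, g i.succ = 0
      · funext k
        have := hrel k
        rw [ha] at this
        simp only [hzero, zero_mul, Finset.sum_const_zero, add_zero, ← map_mul] at this
        have := (C_eq_zero).mp this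
        simpa using (mul_eq_zero.mp this).resolve_left ha0
      · exfalso
        push_neg at hzero
        obtain ⟨j, hj⟩ := hzero
        set E := Finset.univ.sup (fun i : Fin n => (g i.succ).natDegree) with hE
        have hle : ∀ i : Fin n, (g i.succ).natDegree ≤ E := fun i => by
          rw [hE]; exact Finset.le_sup (f := fun i : Fin n => (g i.succ).natDegree) (Finset.mem_univ i)
        have hcoeffE : ∀ i : Fin n, (g i.succ).coeff E = 0 := by
          have hsum : ∀ k, ∑ i : Fin n, (g i.succ).coeff E * y i k = 0 := by
            intro k
            have := congrArg (fun p => Polynomial.coeff p (E+1)) (hrel k)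
            simp only [coeff_add, Polynomial.finset_sum_coeff, ha, ← map_mul,
              coeff_C, coeff_zero] at this
            have hterm : ∀ i : Fin n,
                (g i.succ * (C (x i k) + X * C (y i k))).coeff (E+1)
                = (g i.succ).coeff E * y i k := by
              intro i
              rw [mul_add, coeff_add]
              have h1 : (g i.succ * C (x i k)).coeff (E+1) = 0 := by
                rw [coeff_mul_C]
                have : (g i.succ).natDegree < E + 1 := Nat.lt_succ_of_le (hle i)
                rw [coeff_eq_zero_of_natDegree_lt this, zero_mul]
              have h2 : (g i.succ * (X * C (y i k))).coeff (E+1)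
                  = (g i.succ).coeff E * y i k := by
                rw [show g i.succ * (X * C (y i k)) = g i.succ * X * C (y i k) by ring,
                  coeff_mul_C, coeff_mul_X]
              rw [h1, h2, zero_add]
            rw [Finset.sum_congr rfl (fun i _ => hterm i)] at this
            simpa using this
          exact fun i => congrFun (hy _ hsum) i
        -- contradiction with maximal-degree nonzero coordinate
        obtain ⟨i0, -, hi0⟩ := Finset.exists_mem_eq_sup (Finset.univ : Finset (Fin n))
          ⟨j, Finset.mem_univ j⟩ (fun i => (g i.succ).natDegree)
        by_cases hgi0 : g i0.succ = 0
        · have hE0 : E = 0 := by rw [hE, hi0, hgi0, natDegree_zero]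
          have hdj : (g j.succ).natDegree = 0 :=
            Nat.le_antisymm (hE0 ▸ hle j) (Nat.zero_le _)
          obtain ⟨b, hb⟩ : ∃ b : ℂ, g j.succ = C b := ⟨_, eq_C_of_natDegree_eq_zero hdj⟩
          have := hcoeffE j
          rw [hb, hE0] at this
          simp only [coeff_C_zero] at this
          exact hj (by rw [hb, this, map_zero])
        · have := hcoeffE i0
          rw [hE, hi0] at this
          exact hgi0 (leadingCoeff_eq_zero.mp this)


open Polynomial

local notation "⟪" x ", " y "⟫" => @inner ℂ _ _ x y

private lemma CES_aux_main (n : ℕ) (hn : 1 ≤ n)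
    (V : Submodule ℂ (EuclideanSpace ℂ (Fin 2 × Fin (n+1))))
    (hdim : Module.finrank ℂ V = n)
    (hCES : ∀ ψ ∈ V,
      (∃ (a : Fin 2 → ℂ) (b : Fin (n+1) → ℂ), ∀ i j, ψ (i, j) = a i * b j) → ψ = 0) :
    ∃ A : (Fin (n+1) → ℂ) ≃ₗ[ℂ] (Fin (n+1) → ℂ),
      Vᗮ = Submodule.span ℂ (Set.range fun α : ℂ =>
        (WithLp.toLp 2 (fun p : Fin 2 × Fin (n+1) =>
            ![(1 : ℂ), α] p.1 * A (fun k : Fin (n+1) => α ^ (k : ℕ)) p.2) :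
          EuclideanSpace ℂ (Fin 2 × Fin (n+1)))) := by
  have hfV : FiniteDimensional ℂ V := inferInstance
  let b : Module.Basis (Fin n) ℂ V := Module.finBasisOfFinrankEq ℂ V hdim
  set ψ : Fin n → EuclideanSpace ℂ (Fin 2 × Fin (n+1)) := fun i => (b i : _) with hψ
  set x : Fin n → Fin (n+1) → ℂ := fun i k => starRingEnd ℂ (ψ i (0, k)) with hx
  set y : Fin n → Fin (n+1) → ℂ := fun i k => starRingEnd ℂ (ψ i (1, k)) with hy'
  -- the evaluation of coerced sums
  have hcoe : ∀ (c : Fin n → ℂ) (p : Fin 2 × Fin (n+1)),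
      ((↑(∑ i, c i • b i) : EuclideanSpace ℂ (Fin 2 × Fin (n+1))) p)
        = ∑ i, c i * ψ i p := by
    intro c p
    rw [AddSubmonoidClass.coe_finset_sum, WithLp.ofLp_sum, Finset.sum_apply]
    simp [hψ]
  -- coefficients vanish if the combination does
  have hindep : ∀ (c : Fin n → ℂ), (∑ i, c i • b i) = 0 → c = 0 := by
    intro c hc
    have := Fintype.linearIndependent_iff.mp b.linearIndependent c hc
    funext i; exact this i
  -- key independence statements
  have hxy : ∀ (β : ℂ) (c : Fin n → ℂ),
      (∀ k, ∑ i : Fin n, c i * (x i k + β * y i k) = 0) → c = 0 := by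
    intro β c hc
    set v : V := ∑ i, (starRingEnd ℂ (c i)) • b i with hv
    have hprod : ∀ k, (v : EuclideanSpace ℂ (Fin 2 × Fin (n+1))) (0, k)
        = -(starRingEnd ℂ β) * (v : EuclideanSpace ℂ (Fin 2 × Fin (n+1))) (1, k) := by
      intro k
      have h1 := congrArg (starRingEnd ℂ) (hc k)
      simp only [map_sum, map_mul, map_add, map_zero, hx, hy',
        RingHomCompTriple.comp_apply, RingHom.id_apply] at h1
      have h2 : ∑ i, starRingEnd ℂ (c i) * ψ i (0, k)
          + starRingEnd ℂ β * ∑ i, starRingEnd ℂ (c i) * ψ i (1, k) = 0 := by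
        rw [Finset.mul_sum, ← Finset.sum_add_distrib, ← h1]
        apply Finset.sum_congr rfl; intro i _; ring
      rw [hv, hcoe, hcoe]
      linear_combination h2
    have hv0 : v = 0 := by
      have := hCES (v : EuclideanSpace ℂ (Fin 2 × Fin (n+1))) v.2
        ⟨![-(starRingEnd ℂ β), 1], fun k => (v : EuclideanSpace ℂ (Fin 2 × Fin (n+1))) (1, k), ?_⟩
      · exact Subtype.ext this
      · intro i j
        fin_cases i
        · simpa using hprod j
        · simp
    have := hindep _ (hv ▸ hv0)
    funext i
    have h3 := congrFun this i
    simpa using congrArg (starRingEnd ℂ) h3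
  have hyind : ∀ (c : Fin n → ℂ), (∀ k, ∑ i : Fin n, c i * y i k = 0) → c = 0 := by
    intro c hc
    set v : V := ∑ i, (starRingEnd ℂ (c i)) • b i with hv
    have hprod : ∀ k, (v : EuclideanSpace ℂ (Fin 2 × Fin (n+1))) (1, k) = 0 := by
      intro k
      have h1 := congrArg (starRingEnd ℂ) (hc k)
      simp only [map_sum, map_mul, map_zero, hy',
        RingHomCompTriple.comp_apply, RingHom.id_apply] at h1
      rw [hv, hcoe]
      exact h1
    have hv0 : v = 0 := by
      have := hCES (v : EuclideanSpace ℂ (Fin 2 × Fin (n+1))) v.2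
        ⟨![1, 0], fun k => (v : EuclideanSpace ℂ (Fin 2 × Fin (n+1))) (0, k), ?_⟩
      · exact Subtype.ext this
      · intro i j
        fin_cases i
        · simp
        · simpa using hprod j
    have := hindep _ (hv ▸ hv0)
    funext i
    have h3 := congrFun this i
    simpa using congrArg (starRingEnd ℂ) h3
  -- polynomial matrix machinery
  set Mx : Fin n → Fin (n+1) → ℂ[X] := fun i k => C (x i k) + X * C (y i k) with hMx
  set Nhat : Fin (n+1) → ℂ[X] := fun k =>
    (-1)^(k:ℕ) * (Matrix.of (fun i j : Fin n => Mx i (k.succAbove j))).det with hNhat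
  have Dexp : ∀ q : Fin (n+1) → ℂ[X],
      (Matrix.of (Fin.cons q Mx)).det = ∑ k, q k * Nhat k := by
    intro q
    rw [Matrix.det_succ_row_zero]
    apply Finset.sum_congr rfl
    intro j _
    have h1 : (Matrix.of (Fin.cons q Mx)) 0 j = q j := rfl
    have h2 : ((Matrix.of (Fin.cons q Mx)).submatrix Fin.succ j.succAbove)
        = Matrix.of (fun i l : Fin n => Mx i (j.succAbove l)) := by
      ext i l
      simp [Matrix.submatrix_apply]
    rw [h1, h2, hNhat]
    ring
  have Key1 : ∀ i : Fin n, ∑ k, Mx i k * Nhat k = 0 := by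
    intro i
    rw [← Dexp (Mx i)]
    apply Matrix.det_zero_of_row_eq (i := 0) (j := i.succ) (Fin.succ_ne_zero i).symm
    funext k
    simp [Fin.cons_succ]
  have NdegLe : ∀ k : Fin (n+1), (Nhat k).natDegree ≤ n := by
    intro k
    rw [hNhat]
    refine (natDegree_mul_le).trans ?_
    have h1 : ((-1 : ℂ[X])^(k:ℕ)).natDegree = 0 := by
      rw [natDegree_pow, natDegree_neg, natDegree_one, mul_zero]
    rw [h1, zero_add]
    rw [Matrix.det_apply']
    refine (natDegree_sum_le _ _).trans ?_
    rw [Finset.fold_max_le]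
    refine ⟨Nat.zero_le _, ?_⟩
    intro σ _
    refine (natDegree_mul_le).trans ?_
    have h2 : (Equiv.Perm.sign σ : ℂ[X]).natDegree = 0 := by
      rcases Int.units_eq_one_or (Equiv.Perm.sign σ) with h | h <;> simp [h]
    rw [h2, zero_add]
    refine (natDegree_prod_le _ _).trans ?_
    have h3 : ∀ i : Fin n, ((Matrix.of fun i j : Fin n => Mx i (k.succAbove j)) (σ i) i).natDegree ≤ 1 := by
      intro i
      simp only [Matrix.of_apply, hMx]
      refine (natDegree_add_le _ _).trans ?_
      simp only [natDegree_C, max_le_iff]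
      refine ⟨Nat.zero_le _, ?_⟩
      refine (natDegree_mul_le).trans ?_
      simp [natDegree_X]
    calc ∑ i : Fin n, ((Matrix.of fun i j : Fin n => Mx i (k.succAbove j)) (σ i) i).natDegree
        ≤ ∑ _i : Fin n, 1 := Finset.sum_le_sum (fun i _ => h3 i)
      _ = n := by simp
  -- the coefficient matrix
  set Amat : Matrix (Fin (n+1)) (Fin (n+1)) ℂ :=
    Matrix.of (fun k j : Fin (n+1) => (Nhat k).coeff (j:ℕ)) with hAmat
  have hmulVec : ∀ (α : ℂ) (k : Fin (n+1)),
      Amat.mulVec (fun j : Fin (n+1) => α ^ (j:ℕ)) k = eval α (Nhat k) := by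
    intro α k
    rw [eval_eq_sum_range' (Nat.lt_succ_of_le (NdegLe k))]
    rw [← Fin.sum_univ_eq_sum_range (fun i => (Nhat k).coeff i * α ^ i)]
    simp [Matrix.mulVec, dotProduct, hAmat]
  have hdet : Amat.det ≠ 0 := by
    intro h0
    obtain ⟨dd, hdd0, hddA⟩ := Matrix.exists_vecMul_eq_zero_iff.mpr h0
    have hP : (∑ k, C (dd k) * Nhat k) = 0 := by
      apply Polynomial.ext
      intro j
      rw [Polynomial.finset_sum_coeff]
      simp only [Polynomial.coeff_C_mul, Polynomial.coeff_zero]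
      by_cases hj : j ≤ n
      · have hjf := congrFun hddA ⟨j, Nat.lt_succ_of_le hj⟩
        simpa [Matrix.vecMul, dotProduct, hAmat] using hjf
      · push_neg at hj
        apply Finset.sum_eq_zero
        intro k _
        rw [coeff_eq_zero_of_natDegree_lt (lt_of_le_of_lt (NdegLe k) hj), mul_zero]
    have hDdet : (Matrix.of (Fin.cons (fun k => C (dd k)) Mx)).det = 0 := by
      rw [Dexp]; exact hP
    obtain ⟨g, hgne, hgv⟩ := Matrix.exists_vecMul_eq_zero_iff.mpr hDdet
    have hrel : ∀ k, g 0 * C (dd k)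
        + ∑ i : Fin n, g i.succ * (C (x i k) + X * C (y i k)) = 0 := by
      intro k
      have := congrFun hgv k
      rw [Matrix.vecMul, dotProduct, Fin.sum_univ_succ] at this
      simpa [hMx] using this
    exact hdd0 (aux_core x y hxy hyind dd g hgne hrel)
  haveI hInv : Invertible Amat := Amat.invertibleOfIsUnitDet (isUnit_iff_ne_zero.mpr hdet)
  refine ⟨Amat.toLinearEquiv' hInv, ?_⟩
  set w : ℂ → EuclideanSpace ℂ (Fin 2 × Fin (n+1)) := fun α : ℂ =>
        (WithLp.toLp 2 (fun p : Fin 2 × Fin (n+1) =>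
            ![(1 : ℂ), α] p.1 * (Amat.toLinearEquiv' hInv) (fun k : Fin (n+1) => α ^ (k : ℕ)) p.2) :
          EuclideanSpace ℂ (Fin 2 × Fin (n+1))) with hw
  have hwval : ∀ (α : ℂ) (p : Fin 2 × Fin (n+1)),
      w α p = ![(1 : ℂ), α] p.1 * eval α (Nhat p.2) := by
    intro α p
    rw [hw]
    have h1 : (Amat.toLinearEquiv' hInv) (fun k : Fin (n+1) => α ^ (k:ℕ))
        = Amat.mulVec (fun k : Fin (n+1) => α ^ (k:ℕ)) := by
      rw [show ((Amat.toLinearEquiv' hInv) (fun k : Fin (n+1) => α ^ (k:ℕ)))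
        = (Amat.toLinearEquiv' hInv : Module.End ℂ (Fin (n+1) → ℂ)) (fun k : Fin (n+1) => α ^ (k:ℕ)) from rfl,
        Matrix.toLinearEquiv'_apply, Matrix.toLin'_apply]
    simp only [PiLp.toLp_apply, h1, hmulVec]
  have hmem : ∀ α : ℂ, w α ∈ Vᗮ := by
    intro α
    rw [Submodule.mem_orthogonal]
    have hbase : ∀ i : Fin n, ⟪ψ i, w α⟫ = 0 := by
      intro i
      have hKey := congrArg (eval α) (Key1 i)
      simp only [eval_finset_sum, eval_mul, eval_add, eval_C, eval_X, eval_zero, hMx] at hKey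
      rw [PiLp.inner_apply]
      simp only [RCLike.inner_apply']
      rw [Fintype.sum_prod_type, Fin.sum_univ_two]
      have e0 : ∀ k, (starRingEnd ℂ) (ψ i (0,k)) * w α (0,k) = x i k * eval α (Nhat k) := by
        intro k
        rw [hwval]
        simp [hx]
      have e1 : ∀ k, (starRingEnd ℂ) (ψ i (1,k)) * w α (1,k)
          = y i k * (α * eval α (Nhat k)) := by
        intro k
        rw [hwval]
        show (starRingEnd ℂ) (ψ i (1,k)) * (α * eval α (Nhat k)) = y i k * (α * eval α (Nhat k))
        rw [hy']
      rw [Finset.sum_congr rfl (fun k _ => e0 k), Finset.sum_congr rfl (fun k _ => e1 k),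
        ← Finset.sum_add_distrib]
      rw [← hKey]
      apply Finset.sum_congr rfl
      intro k _
      ring
    intro u hu
    have hrep : (∑ j, b.repr ⟨u, hu⟩ j • ψ j) = u := by
      have h2 := congrArg (Subtype.val) (b.sum_repr ⟨u, hu⟩)
      rw [AddSubmonoidClass.coe_finset_sum] at h2
      simpa [hψ] using h2
    rw [← hrep, sum_inner]
    simp [inner_smul_left, hbase]
  have hA : ∀ v : Fin (n+1) → ℂ, (Amat.toLinearEquiv' hInv) v = Amat.mulVec v := by
    intro v
    rw [show ((Amat.toLinearEquiv' hInv) v)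
      = (Amat.toLinearEquiv' hInv : Module.End ℂ (Fin (n+1) → ℂ)) v from rfl,
      Matrix.toLinearEquiv'_apply, Matrix.toLin'_apply]
  set U : Fin (n+2) → EuclideanSpace ℂ (Fin 2 × Fin (n+1)) := fun j =>
    WithLp.toLp 2 (fun (p : Fin 2 × Fin (n+1)) => (X^((p.1:ℕ)) * Nhat p.2).coeff (j:ℕ)) with hU
  have hwU : ∀ α : ℂ, w α = ∑ j : Fin (n+2), α^(j:ℕ) • U j := by
    intro α
    ext p
    obtain ⟨i2, k⟩ := p
    rw [hwval]
    have hdeg2 : (X^((i2:ℕ)) * Nhat k).natDegree < n+2 := by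
      refine lt_of_le_of_lt natDegree_mul_le ?_
      rw [natDegree_X_pow]
      have h1 : (i2:ℕ) ≤ 1 := Nat.lt_succ_iff.mp i2.isLt
      have h2 := NdegLe k
      omega
    have h5 : eval α (X^((i2:ℕ)) * Nhat k) = ![(1:ℂ), α] i2 * eval α (Nhat k) := by
      rw [eval_mul, eval_pow, eval_X]
      congr 1
      fin_cases i2 <;> simp
    rw [← h5, eval_eq_sum_range' hdeg2, ← Fin.sum_univ_eq_sum_range]
    rw [WithLp.ofLp_sum, Finset.sum_apply]
    apply Finset.sum_congr rfl
    intro j _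
    simp [hU, mul_comm]
  have hUindep : LinearIndependent ℂ U := by
    rw [Fintype.linearIndependent_iff]
    intro c hc
    have h0 : ∀ k : Fin (n+1), ∑ j : Fin (n+2), c j * (Nhat k).coeff (j:ℕ) = 0 := by
      intro k
      have h1 := congrArg (fun v : EuclideanSpace ℂ (Fin 2 × Fin (n+1)) => v (0, k)) hc
      rw [WithLp.ofLp_sum, Finset.sum_apply] at h1
      simpa [hU] using h1
    have hcc : (fun j : Fin (n+1) => c j.castSucc) = 0 := by
      have hAv : Amat.mulVec (fun j : Fin (n+1) => c j.castSucc) = 0 := by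
        funext k
        have h6 := h0 k
        rw [Fin.sum_univ_castSucc] at h6
        have h7 : (Nhat k).coeff ((Fin.last (n+1)):ℕ) = 0 :=
          coeff_eq_zero_of_natDegree_lt (by rw [Fin.val_last]; exact Nat.lt_succ_of_le (NdegLe k))
        rw [h7, mul_zero, add_zero] at h6
        simpa [Matrix.mulVec, dotProduct, hAmat, mul_comm] using h6
      have h8 : (Amat.toLinearEquiv' hInv) (fun j : Fin (n+1) => c j.castSucc) = 0 := by
        rw [hA, hAv]
      exact (LinearEquiv.map_eq_zero_iff _).mp h8
    have hlast : c (Fin.last (n+1)) = 0 := by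
      have h9 : ∀ k : Fin (n+1), c (Fin.last (n+1)) * (Nhat k).coeff n = 0 := by
        intro k
        have h1 := congrArg (fun v : EuclideanSpace ℂ (Fin 2 × Fin (n+1)) => v (1, k)) hc
        rw [WithLp.ofLp_sum, Finset.sum_apply, Fin.sum_univ_castSucc] at h1
        have hz : ∀ j : Fin (n+1), c j.castSucc = 0 := fun j => congrFun hcc j
        simp only [hU, Pi.smul_apply, smul_eq_mul, hz, zero_mul,
          Finset.sum_const_zero, zero_add, Pi.zero_apply] at h1
        rw [Fin.val_last] at h1
        simpa [pow_one, coeff_X_mul] using h1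
      by_contra hcl
      apply hdet
      apply Matrix.det_eq_zero_of_column_eq_zero (⟨n, Nat.lt_succ_self n⟩ : Fin (n+1))
      intro i
      have h10 := h9 i
      have h11 : (Nhat i).coeff n = 0 := by
        rcases mul_eq_zero.mp h10 with h | h
        · exact absurd h hcl
        · exact h
      simpa [hAmat] using h11
    intro j
    rcases Fin.eq_castSucc_or_eq_last j with ⟨j', rfl⟩ | rfl
    · exact congrFun hcc j'
    · exact hlast
  set S := Submodule.span ℂ (Set.range w) with hS
  have hSV : S ≤ Vᗮ := Submodule.span_le.mpr (by rintro _ ⟨α, rfl⟩; exact hmem α)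
  have hSbot : Sᗮ ≤ (Submodule.span ℂ (Set.range U))ᗮ := by
    intro z hz
    rw [Submodule.mem_orthogonal]
    have haz : ∀ j, ⟪U j, z⟫ = 0 := by
      have hα : ∀ α : ℂ, ∑ j : Fin (n+2), (starRingEnd ℂ α)^(j:ℕ) * ⟪U j, z⟫ = 0 := by
        intro α
        have h11 : ⟪w α, z⟫ = 0 :=
          (Submodule.mem_orthogonal S z).mp hz _ (Submodule.subset_span ⟨α, rfl⟩)
        rw [hwU α, sum_inner] at h11
        simpa [inner_smul_left, map_pow] using h11
      have h12 := aux_coeffs_zero (fun j => ⟪U j, z⟫) (fun β => by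
        have h13 := hα (starRingEnd ℂ β)
        rw [← h13]
        apply Finset.sum_congr rfl
        intro j _
        rw [Complex.conj_conj]
        ring)
      exact fun j => congrFun h12 j
    intro u hu
    induction hu using Submodule.span_induction with
    | mem u' hu' =>
      obtain ⟨j, rfl⟩ := hu'
      exact haz j
    | zero => exact inner_zero_left z
    | add u₁ u₂ _ _ h1 h2 => rw [inner_add_left, h1, h2, add_zero]
    | smul a u' _ h1 => rw [inner_smul_left, h1, mul_zero]
  have hfinU : Module.finrank ℂ (Submodule.span ℂ (Set.range U)) = n + 2 := by
    rw [finrank_span_eq_card hUindep]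
    simp
  have htot : Module.finrank ℂ (EuclideanSpace ℂ (Fin 2 × Fin (n+1))) = 2*(n+1) := by
    rw [finrank_euclideanSpace]
    simp [Fintype.card_prod]
  have e1 := Submodule.finrank_add_finrank_orthogonal V
  have e2 := Submodule.finrank_add_finrank_orthogonal S
  have e3 := Submodule.finrank_add_finrank_orthogonal (Submodule.span ℂ (Set.range U))
  have e4 : Module.finrank ℂ Sᗮ ≤ Module.finrank ℂ (Submodule.span ℂ (Set.range U))ᗮ :=
    Submodule.finrank_mono hSbot
  rw [htot] at e1 e2 e3
  rw [hdim] at e1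
  rw [hfinU] at e3
  exact (Submodule.eq_of_le_of_finrank_le hSV (by omega)).symm

/-- Let `m ≥ 2` and let `V` be a subspace of `ℂ² ⊗ ℂᵐ` of dimension `m − 1`
containing no nonzero product vector `a ⊗ b`.  Then there is an invertible linear map
`𝒜 : ℂᵐ → ℂᵐ` such that `V^⊥` is the span of the vectors
`(1,α) ⊗ 𝒜(1,α,α²,…,α^{m−1})`, `α ∈ ℂ`. -/
theorem CES_orthocomplement_spanned_by_curve (m : ℕ) (hm : 2 ≤ m)
    (V : Submodule ℂ (EuclideanSpace ℂ (Fin 2 × Fin m)))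
    (hdim : Module.finrank ℂ V = m - 1)
    (hCES : ∀ ψ ∈ V,
      (∃ (a : Fin 2 → ℂ) (b : Fin m → ℂ), ∀ i j, ψ (i, j) = a i * b j) → ψ = 0) :
    ∃ A : (Fin m → ℂ) ≃ₗ[ℂ] (Fin m → ℂ),
      Vᗮ = Submodule.span ℂ (Set.range fun α : ℂ =>
        (WithLp.toLp 2 (fun p : Fin 2 × Fin m =>
            ![(1 : ℂ), α] p.1 * A (fun k : Fin m => α ^ (k : ℕ)) p.2) :
          EuclideanSpace ℂ (Fin 2 × Fin m))) := by
  obtain _ | n := m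
  · omega
  · exact CES_aux_main n (by omega) V (by simpa using hdim) hCES
end
end

section
/- In ℂ² ⊗ ℂ² ⊗ ℂ², for every γ = (γ₀,γ₁) ∈ ℂ², the vector Σ_{j=0}^{1} γ_j (|0⟩⊗|j⟩⊗|1⟩ − |1⟩⊗|j⟩⊗|0⟩) is orthogonal to the vector (1,α) ⊗ (1,α²) ⊗ (1,α) for every α ∈ ℂ. Consequently, the orthogonal complement of the span of {(1,α) ⊗ (1,α²) ⊗ (1,α) : α ∈ ℂ} contains nonzero vectors that are biproduct across the bipartition AC|B, and hence is not a genuinely entangled subspace. (This shows that the choice 𝒜 = identity in the construction of maximal GESs from spanning families (1,α) ⊗ 𝒜(1,α,α²,α³) fails.) -/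
noncomputable section

/-- The three-qubit (more generally, three-qudit) Hilbert space. -/
abbrev TriH (d₁ d₂ d₃ : ℕ) := EuclideanSpace ℂ (Fin d₁ × Fin d₂ × Fin d₃)

/-- `ψ` is biproduct across the bipartition `A|BC`. -/
def BiprodA {d₁ d₂ d₃ : ℕ} (ψ : TriH d₁ d₂ d₃) : Prop :=
  ∃ (a : Fin d₁ → ℂ) (g : Fin d₂ × Fin d₃ → ℂ), ∀ i j k, ψ (i, j, k) = a i * g (j, k)

/-- `ψ` is biproduct across the bipartition `B|AC`. -/
def BiprodB {d₁ d₂ d₃ : ℕ} (ψ : TriH d₁ d₂ d₃) : Prop :=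
  ∃ (b : Fin d₂ → ℂ) (g : Fin d₁ × Fin d₃ → ℂ), ∀ i j k, ψ (i, j, k) = b j * g (i, k)

/-- `ψ` is biproduct across the bipartition `C|AB`. -/
def BiprodC {d₁ d₂ d₃ : ℕ} (ψ : TriH d₁ d₂ d₃) : Prop :=
  ∃ (c : Fin d₃ → ℂ) (g : Fin d₁ × Fin d₂ → ℂ), ∀ i j k, ψ (i, j, k) = c k * g (i, j)

/-- A genuinely multiparty entangled (GME) tripartite vector: nonzero and not biproduct
across any of the three bipartitions. -/
def IsGME3 {d₁ d₂ d₃ : ℕ} (ψ : TriH d₁ d₂ d₃) : Prop :=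
  ψ ≠ 0 ∧ ¬ BiprodA ψ ∧ ¬ BiprodB ψ ∧ ¬ BiprodC ψ

/-- A genuinely entangled subspace (GES): all its nonzero vectors are GME. -/
def IsGES3 {d₁ d₂ d₃ : ℕ} (V : Submodule ℂ (TriH d₁ d₂ d₃)) : Prop :=
  ∀ ψ ∈ V, ψ ≠ 0 → IsGME3 ψ

/-- The family `(1,α) ⊗ (1,α²) ⊗ (1,α)` (the choice `𝒜 = 𝟙`). -/
def idCurve (α : ℂ) : TriH 2 2 2 :=
  WithLp.toLp 2 fun (p : Fin 2 × Fin 2 × Fin 2) => ![(1 : ℂ), α] p.1 * ![(1 : ℂ), α ^ 2] p.2.1 * ![(1 : ℂ), α] p.2.2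

/-- The vector `Σ_j γ_j (|0⟩⊗|j⟩⊗|1⟩ − |1⟩⊗|j⟩⊗|0⟩)`. -/
def singVec (γ : Fin 2 → ℂ) : TriH 2 2 2 :=
  WithLp.toLp 2 fun (p : Fin 2 × Fin 2 × Fin 2) => γ p.2.1 *
    (if p.1 = 0 ∧ p.2.2 = 1 then 1 else if p.1 = 1 ∧ p.2.2 = 0 then -1 else 0)

lemma mem_orth_of_forall {s : Set (TriH 2 2 2)} {ψ : TriH 2 2 2}
    (h : ∀ u ∈ s, (inner ℂ u ψ : ℂ) = 0) : ψ ∈ (Submodule.span ℂ s)ᗮ := by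
  rw [← Submodule.span_singleton_le_iff_mem, ← Submodule.isOrtho_iff_le,
    Submodule.isOrtho_comm, Submodule.isOrtho_span]
  rintro u hu v rfl
  exact h u hu

lemma orth_key (γ : Fin 2 → ℂ) (α : ℂ) : (inner ℂ (idCurve α) (singVec γ) : ℂ) = 0 := by
  simp only [PiLp.inner_apply, Fintype.sum_prod_type, Fin.sum_univ_two, idCurve, singVec,
    RCLike.inner_apply, Matrix.cons_val_zero, Matrix.cons_val_one, Matrix.head_cons]
  norm_num
  ring

/-- each `singVec γ` is orthogonal to every `(1,α) ⊗ (1,α²) ⊗ (1,α)`;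
consequently the orthocomplement of the span of this family contains a nonzero vector
biproduct across `AC|B`, and hence is not a genuinely entangled subspace. -/
theorem identity_matrix_fails (γ : Fin 2 → ℂ) :
    (∀ α : ℂ, (inner ℂ (idCurve α) (singVec γ) : ℂ) = 0) ∧
    (∃ ψ ∈ (Submodule.span ℂ (Set.range idCurve))ᗮ, ψ ≠ 0 ∧ BiprodB ψ) ∧
    ¬ IsGES3 ((Submodule.span ℂ (Set.range idCurve))ᗮ) := by
  have hmem : ∀ δ : Fin 2 → ℂ, singVec δ ∈ (Submodule.span ℂ (Set.range idCurve))ᗮ := by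
    intro δ
    refine mem_orth_of_forall ?_
    rintro u ⟨α, rfl⟩
    exact orth_key δ α
  have hne : singVec ![1, 0] ≠ 0 := by
    intro h
    have := congrArg (fun v : TriH 2 2 2 => v (0, 0, 1)) h
    simp [singVec] at this
  have hbi : BiprodB (singVec ![1, 0]) := by
    exact ⟨![1, 0], fun p => if p.1 = 0 ∧ p.2 = 1 then 1 else if p.1 = 1 ∧ p.2 = 0 then -1 else 0,
      fun i j k => rfl⟩
  refine ⟨orth_key γ, ⟨singVec ![1, 0], hmem _, hne, hbi⟩, ?_⟩
  intro hges
  exact ((hges _ (hmem ![1, 0]) hne).2.2.1) hbi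
end
end
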